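/- arXiv:2510.21247 — 2 statements merged into one kernel-verified Lean document; each statement's English description precedes it below -/
import Mathlib

section
/- Let L/k be a finite Galois extension with Galois group G, let n be a positive integer, and suppose G acts on the index set {1,...,n}. Consider the G-module M = (L^×)^n with twisted permutation action (σ·x)_i = σ(x_{σ^{-1}(i)}). Then every 1-cocycle D : G → M (i.e. every map satisfying D(στ)_i = D(σ)_i · σ(D(τ)_{σ^{-1}(i)}) for all σ, τ ∈ G and all i) is a coboundary: there exists x ∈ (L^×)^n such that D(τ)_i = τ(x_{τ^{-1}(i)}) · x_i^{-1} for all τ ∈ G and all i. Equivalently, H^1(G, M) = 0. -/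
lemma dedekind_exists_ne_zero {k L : Type*} [Field k] [Field L] [Algebra k L]
    (S : Finset (L ≃ₐ[k] L)) (hS : S.Nonempty) (a : (L ≃ₐ[k] L) → L)
    (ha : ∀ σ ∈ S, a σ ≠ 0) :
    ∃ t : L, ∑ σ ∈ S, a σ * σ t ≠ 0 := by
  by_contra h
  push_neg at h
  have hli : LinearIndependent L (fun (f : L ≃ₐ[k] L) => (f : L → L)) :=
    LinearIndependent.comp (ι' := L ≃ₐ[k] L)
      (linearIndependent_monoidHom L L) (fun f => f)
      (fun x y hxy => by ext z; exact DFunLike.ext_iff.1 hxy z)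
  obtain ⟨σ, hσ⟩ := hS
  refine ha σ hσ (linearIndependent_iff'.1 hli S a ?_ σ hσ)
  funext t
  simpa using h t

/-- Generalized Hilbert 90: for a finite Galois extension `L/k` with group
`G = Gal(L/k)` acting on `{1,…,n}` via `ρ`, every 1-cocycle of `G` valued in `(L^×)^n`
with the twisted permutation action is a coboundary, i.e. `H¹(G, (L^×)^n) = 0`. -/
theorem twisted_permutation_H1_trivial (k L : Type*) [Field k] [Field L] [Algebra k L]
    [IsGalois k L] [FiniteDimensional k L] (n : ℕ) (hn : 0 < n)
    (ρ : (L ≃ₐ[k] L) →* Equiv.Perm (Fin n))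
    (D : (L ≃ₐ[k] L) → Fin n → L)
    (hD0 : ∀ σ i, D σ i ≠ 0)
    (hcocycle : ∀ (σ τ : L ≃ₐ[k] L) (i : Fin n),
      D (σ * τ) i = D σ i * σ (D τ ((ρ σ)⁻¹ i))) :
    ∃ x : Fin n → L, (∀ i, x i ≠ 0) ∧
      ∀ (τ : L ≃ₐ[k] L) (i : Fin n), D τ i = τ (x ((ρ τ)⁻¹ i)) * (x i)⁻¹ := by
  classical
  letI : MulAction (L ≃ₐ[k] L) (Fin n) := MulAction.compHom (Fin n) ρ
  have hsmul : ∀ (σ : L ≃ₐ[k] L) (i : Fin n), σ • i = ρ σ i := fun σ i => rfl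
  set rep : Fin n → Fin n := fun i =>
    (Quotient.mk (MulAction.orbitRel (L ≃ₐ[k] L) (Fin n)) i).out with hrepdef
  have hmk : ∀ i j : Fin n, (∃ σ : L ≃ₐ[k] L, ρ σ j = i) →
      Quotient.mk (MulAction.orbitRel (L ≃ₐ[k] L) (Fin n)) i
        = Quotient.mk (MulAction.orbitRel (L ≃ₐ[k] L) (Fin n)) j := by
    intro i j ⟨σ, hσ⟩
    exact Quotient.sound ⟨σ, hσ⟩
  have hrep_orbit : ∀ i : Fin n, ∃ σ : L ≃ₐ[k] L, (ρ σ)⁻¹ i = rep i := by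
    intro i
    have h1 : (Quotient.mk (MulAction.orbitRel (L ≃ₐ[k] L) (Fin n)) (rep i))
        = Quotient.mk (MulAction.orbitRel (L ≃ₐ[k] L) (Fin n)) i := Quotient.out_eq _
    obtain ⟨σ, hσ⟩ := Quotient.exact h1
    have hσ' : ρ σ i = rep i := hσ
    refine ⟨σ⁻¹, ?_⟩
    rw [map_inv, inv_inv, hσ']
  have hrep_inv : ∀ (σ : L ≃ₐ[k] L) (i : Fin n), rep ((ρ σ)⁻¹ i) = rep i := by
    intro σ i
    have h1 : Quotient.mk (MulAction.orbitRel (L ≃ₐ[k] L) (Fin n)) ((ρ σ)⁻¹ i)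
        = Quotient.mk (MulAction.orbitRel (L ≃ₐ[k] L) (Fin n)) i :=
      hmk _ _ ⟨σ⁻¹, by simp⟩
    simp only [hrepdef]
    rw [h1]
  have hrep_idem : ∀ i, rep (rep i) = rep i := by
    intro i
    simp only [hrepdef]
    rw [Quotient.out_eq]
  have ht : ∀ j : Fin n, ∃ t : L,
      ∑ σ ∈ Finset.univ.filter (fun σ : L ≃ₐ[k] L => (ρ σ)⁻¹ j = j),
        D σ j * σ t ≠ 0 := by
    intro j
    refine dedekind_exists_ne_zero _ ⟨1, ?_⟩ _ (fun σ _ => hD0 σ j)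
    simp
    rfl
  choose t ht using ht
  set c : Fin n → L := fun j => if rep j = j then t j else 0 with hc
  set X : Fin n → L := fun i => ∑ σ : L ≃ₐ[k] L, D σ i * σ (c ((ρ σ)⁻¹ i)) with hX
  have key : ∀ (τ : L ≃ₐ[k] L) (i : Fin n), X i = D τ i * τ (X ((ρ τ)⁻¹ i)) := by
    intro τ i
    rw [hX]
    simp only
    rw [map_sum, Finset.mul_sum]
    rw [← Equiv.sum_comp (Equiv.mulLeft τ)
      (fun σ : L ≃ₐ[k] L => D σ i * σ (c ((ρ σ)⁻¹ i)))]
    refine Finset.sum_congr rfl fun σ _ => ?_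
    simp only [Equiv.coe_mulLeft]
    rw [hcocycle τ σ i]
    simp [map_mul, mul_inv_rev, AlgEquiv.mul_apply, Equiv.Perm.mul_apply, mul_assoc]
  have hXrep : ∀ j : Fin n, rep j = j → X j ≠ 0 := by
    intro j hj
    have h2 : X j = ∑ σ ∈ Finset.univ.filter (fun σ : L ≃ₐ[k] L => (ρ σ)⁻¹ j = j),
        D σ j * σ (t j) := by
      rw [hX]
      simp only
      rw [Finset.sum_filter]
      refine Finset.sum_congr rfl fun σ _ => ?_
      by_cases h : (ρ σ)⁻¹ j = j
      · simp only [h, if_pos]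
        congr 1
        rw [hc]
        simp [h, hj]
      · simp only [h, if_neg, hc]
        have h3 : ¬ (rep ((ρ σ)⁻¹ j) = (ρ σ)⁻¹ j) := by
          rw [hrep_inv, hj]
          exact fun hh => h hh.symm
        rw [if_neg h3]
        simp
    rw [h2]
    exact ht j
  have hXne : ∀ i : Fin n, X i ≠ 0 := by
    intro i
    obtain ⟨σ, hσ⟩ := hrep_orbit i
    rw [key σ i, hσ]
    refine mul_ne_zero (hD0 σ i) ?_
    have := hXrep (rep i) (hrep_idem i)
    exact fun h => this (by simpa using σ.injective (by simpa using h))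
  refine ⟨fun i => (X i)⁻¹, fun i => inv_ne_zero (hXne i), fun τ i => ?_⟩
  have hτ : τ (X ((ρ τ)⁻¹ i)) ≠ 0 :=
    fun h => hXne _ (by simpa using τ.injective (by simpa using h))
  rw [map_inv₀, inv_inv, key τ i, mul_comm (D τ i), inv_mul_cancel_left₀ hτ]
end

section
/- Let L/k be a finite Galois extension with group G, let n be a positive integer with a G-action on {1,...,n}, and let V be an n-dimensional L-vector space with basis ω_1,...,ω_n. Suppose G acts on V semilinearly (σ(a·v) = σ(a)·σ(v) for a ∈ L) in such a way that for each σ ∈ G and each i there exists d_i(σ) ∈ L^× with σ(ω_i) = d_i(σ)·ω_{σ(i)}. Then there exist scalars x_1,...,x_n ∈ L^× such that the rescaled basis ω'_i = x_i·ω_i satisfies σ(ω'_i) = ω'_{σ(i)} for all σ ∈ G and all i. -/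
/-- A semilinear Galois action that permutes the lines spanned by a basis (up to scalars)
according to an action of `G = Gal(L/k)` on the index set can be made an honest
permutation of a rescaled basis. -/
theorem rescale_to_permutation_basis (k L : Type*) [Field k] [Field L] [Algebra k L]
    [IsGalois k L] [FiniteDimensional k L] (n : ℕ) (hn : 0 < n)
    (V : Type*) [AddCommGroup V] [Module L V]
    (ω : Module.Basis (Fin n) L V)
    (ρ : (L ≃ₐ[k] L) →* Equiv.Perm (Fin n))
    (Φ : (L ≃ₐ[k] L) → V → V)
    (hΦone : ∀ v : V, Φ 1 v = v)
    (hΦmul : ∀ (σ τ : L ≃ₐ[k] L) (v : V), Φ (σ * τ) v = Φ σ (Φ τ v))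
    (hΦadd : ∀ (σ : L ≃ₐ[k] L) (v w : V), Φ σ (v + w) = Φ σ v + Φ σ w)
    (hΦsmul : ∀ (σ : L ≃ₐ[k] L) (a : L) (v : V), Φ σ (a • v) = σ a • Φ σ v)
    (d : (L ≃ₐ[k] L) → Fin n → Lˣ)
    (hperm : ∀ (σ : L ≃ₐ[k] L) (i : Fin n), Φ σ (ω i) = (d σ i : L) • ω (ρ σ i)) :
    ∃ x : Fin n → Lˣ,
      ∀ (σ : L ≃ₐ[k] L) (i : Fin n),
        Φ σ ((x i : L) • ω i) = (x (ρ σ i) : L) • ω (ρ σ i) := by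
  classical
  -- the cocycle relation
  have hcoc : ∀ (σ τ : L ≃ₐ[k] L) (i : Fin n),
      (d (σ * τ) i : L) = σ (d τ i) * (d σ (ρ τ i) : L) := by
    intro σ τ i
    have h1 : Φ (σ * τ) (ω i) = (d (σ * τ) i : L) • ω (ρ σ (ρ τ i)) := by
      rw [hperm, map_mul, Equiv.Perm.mul_apply]
    have h2 : Φ (σ * τ) (ω i) = (σ (d τ i) * (d σ (ρ τ i) : L)) • ω (ρ σ (ρ τ i)) := by
      rw [hΦmul, hperm, hΦsmul, hperm, smul_smul]
    exact smul_left_injective L (ω.ne_zero _) (h1.symm.trans h2)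
  -- the averaging sums
  set F : Fin n → L → Fin n → L := fun i₀ c j =>
    ∑ τ : L ≃ₐ[k] L, if ρ τ i₀ = j then (d τ i₀ : L) * τ c else 0 with hF
  -- equivariance of the sums
  have hB : ∀ (σ : L ≃ₐ[k] L) (i₀ : Fin n) (c : L) (j : Fin n),
      σ (F i₀ c j) * (d σ j : L) = F i₀ c (ρ σ j) := by
    intro σ i₀ c j
    simp only [hF]
    rw [map_sum, Finset.sum_mul,
      ← Equiv.sum_comp (Equiv.mulLeft σ)
        (fun τ => if ρ τ i₀ = ρ σ j then (d τ i₀ : L) * τ c else 0)]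
    apply Finset.sum_congr rfl
    intro τ _
    show σ (if ρ τ i₀ = j then (d τ i₀ : L) * τ c else 0) * (d σ j : L) =
      if ρ (σ * τ) i₀ = ρ σ j then (d (σ * τ) i₀ : L) * (σ * τ) c else 0
    by_cases h : ρ τ i₀ = j
    · rw [if_pos h, if_pos (by rw [map_mul, Equiv.Perm.mul_apply, h]),
        map_mul, hcoc σ τ i₀, h, AlgEquiv.mul_apply]
      ring
    · rw [if_neg h, if_neg (fun hc => h (by
        rw [map_mul, Equiv.Perm.mul_apply] at hc
        exact (ρ σ).injective hc)), map_zero, zero_mul]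
  -- nonvanishing for some c, by linear independence of characters
  have hC : ∀ i₀ : Fin n, ∃ c : L, F i₀ c i₀ ≠ 0 := by
    intro i₀
    by_contra h
    push_neg at h
    have finj : Function.Injective (fun τ : L ≃ₐ[k] L => (τ : L →* L)) := by
      intro a b hab
      ext x
      exact congrArg (fun f => f x) (congrArg DFunLike.coe hab)
    have li : LinearIndependent L (fun τ : L ≃ₐ[k] L => ((τ : L →* L) : L → L)) :=
      (linearIndependent_monoidHom L L).comp _ finj
    have hsum : (∑ τ : L ≃ₐ[k] L,
        (if ρ τ i₀ = i₀ then (d τ i₀ : L) else 0) • ((τ : L →* L) : L → L)) = 0 := by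
      funext c
      have := h c
      simp only [hF] at this
      rw [Finset.sum_apply]
      simpa [ite_apply, Pi.smul_apply, Pi.zero_apply, smul_eq_mul, ite_smul, zero_smul]
        using this
    have := Fintype.linearIndependent_iff.mp li
      (fun τ => if ρ τ i₀ = i₀ then (d τ i₀ : L) else 0) hsum 1
    rw [if_pos (by simp)] at this
    exact Units.ne_zero _ this
  choose c hc using hC
  -- orbit representatives
  let r : Setoid (Fin n) :=
    { r := fun i j => ∃ σ : L ≃ₐ[k] L, ρ σ i = j
      iseqv := ⟨fun i => ⟨1, by simp⟩,
        fun {i j} h => by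
          obtain ⟨σ, hσ⟩ := h
          exact ⟨σ⁻¹, by rw [← hσ, map_inv, Equiv.Perm.inv_def, Equiv.symm_apply_apply]⟩,
        fun {i j l} h1 h2 => by
          obtain ⟨σ, hσ⟩ := h1
          obtain ⟨τ, hτ⟩ := h2
          exact ⟨τ * σ, by rw [map_mul, Equiv.Perm.mul_apply, hσ, hτ]⟩⟩ }
  let rep : Fin n → Fin n := fun j => (Quotient.mk r j).out
  have hrep1 : ∀ j, ∃ σ : L ≃ₐ[k] L, ρ σ (rep j) = j := fun j =>
    Quotient.exact (Quotient.out_eq (Quotient.mk r j))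
  have hrep2 : ∀ (σ : L ≃ₐ[k] L) (j : Fin n), rep (ρ σ j) = rep j := by
    intro σ j
    have : Quotient.mk r (ρ σ j) = Quotient.mk r j :=
      Quotient.sound ⟨σ⁻¹, by rw [map_inv, Equiv.Perm.inv_def, Equiv.symm_apply_apply]⟩
    simp only [rep, this]
  -- the rescaling scalars
  set y : Fin n → L := fun j => F (rep j) (c (rep j)) j with hy_def
  have hy : ∀ j, y j ≠ 0 := by
    intro j
    obtain ⟨σ, hσ⟩ := hrep1 j
    have hBj := hB σ (rep j) (c (rep j)) (rep j)
    rw [hσ] at hBj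
    rw [hy_def]
    simp only
    rw [← hBj]
    refine mul_ne_zero (fun h0 => hc (rep j) ?_) (Units.ne_zero _)
    have := congrArg σ.symm h0
    simpa using this
  have hyB : ∀ (σ : L ≃ₐ[k] L) (i : Fin n), σ (y i) * (d σ i : L) = y (ρ σ i) := by
    intro σ i
    have := hB σ (rep i) (c (rep i)) i
    rw [hy_def]
    simp only [hrep2 σ i]
    exact this
  refine ⟨fun j => Units.mk0 (y j) (hy j), ?_⟩
  intro σ i
  rw [hΦsmul, hperm, smul_smul, Units.val_mk0, Units.val_mk0, hyB]
end
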